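/- Let g : ℝ → ℝ be the 1-periodic function with g(x) = (15√5/4) · max{1/5 − (x − 1/2)², 0} for x ∈ [0,1], and let g_d(x) = ∏_{i=1}^d g(x_i) for x ∈ 𝕋^d. Then ∫_{𝕋^d} g_d(x) dx = 1, and g_d belongs to S²_{1,∞}B(𝕋^d); concretely, sup_{j∈ℕ₀^d} 2^{2|j|₁} ω₃^{e(j)}(g_d, 2^{−j})₁ < ∞, i.e. the difference Besov norm ‖g_d‖^{(3)}_{S²_{1,∞}B} is finite. -/

import Mathlib

open MeasureTheory Finset ENNReal

noncomputable section

/-- The unit cube `[0,1]^d`, representing the torus `𝕋^d`. -/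
def unitCube (d : ℕ) : Set (Fin d → ℝ) := Set.univ.pi fun _ => Set.Icc (0:ℝ) 1

/-- `f` is 1-periodic in each variable. -/
def IsPeriodic1 {d : ℕ} {α : Type*} (f : (Fin d → ℝ) → α) : Prop :=
  ∀ (x : Fin d → ℝ) (z : Fin d → ℤ), f (fun i => x i + z i) = f x

/-- Univariate `m`-th difference applied in coordinate `i`. -/
def coordDiff {d : ℕ} (m : ℕ) (i : Fin d) (h : ℝ) (f : (Fin d → ℝ) → ℝ) :
    (Fin d → ℝ) → ℝ := fun x =>
  ∑ l ∈ Finset.range (m + 1),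
    (-1 : ℝ) ^ (m - l) * (m.choose l) * f (Function.update x i (x i + l * h))

/-- Mixed `(m,e)`-th difference operator `Δ_h^{m,e}`. -/
def mixedDiff {d : ℕ} (m : ℕ) (e : Finset (Fin d)) (h : Fin d → ℝ)
    (f : (Fin d → ℝ) → ℝ) : (Fin d → ℝ) → ℝ :=
  (e.sort (· ≤ ·)).foldr (fun i g => coordDiff m i (h i) g) f

/-- `L_p(𝕋^d)` norm, computed on a fundamental domain. -/
def torusLp {d : ℕ} (p : ℝ≥0∞) (f : (Fin d → ℝ) → ℝ) : ℝ≥0∞ :=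
  eLpNorm f p (volume.restrict (unitCube d))

/-- Mixed `(m,e)`-th modulus of continuity `ω_m^e(f,t)_p`. -/
def omegaMod {d : ℕ} (m : ℕ) (e : Finset (Fin d)) (p : ℝ≥0∞)
    (f : (Fin d → ℝ) → ℝ) (t : Fin d → ℝ) : ℝ≥0∞ :=
  ⨆ (h : Fin d → ℝ) (_ : ∀ i ∈ e, |h i| < t i), torusLp p (mixedDiff m e h f)

/-- `ℓ_q` norm of a family in `ℝ≥0∞`, with the sup modification for `q = ∞`. -/
def lqNorm {ι : Type*} (q : ℝ≥0∞) (a : ι → ℝ≥0∞) : ℝ≥0∞ :=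
  if q = ∞ then ⨆ i, a i else (∑' i, a i ^ q.toReal) ^ (1 / q.toReal)

/-- The difference Besov norm `‖f‖^{(m)}_{S^r_{p,q}B}` of dominating mixed smoothness. -/
def besovNorm (d m : ℕ) (r : ℝ) (p q : ℝ≥0∞) (f : (Fin d → ℝ) → ℝ) : ℝ≥0∞ :=
  lqNorm q fun j : Fin d → ℕ =>
    ENNReal.ofReal ((2:ℝ) ^ (r * ∑ i, (j i : ℝ))) *
      omegaMod m (Finset.univ.filter fun i => j i ≠ 0) p f
        (fun i => (2:ℝ) ^ (-(j i : ℝ)))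

/-- The 1-periodic kink function `g(x) = (15√5/4) max{1/5 - (x-1/2)², 0}` on `[0,1]`. -/
def kinkFn (x : ℝ) : ℝ :=
  (15 * Real.sqrt 5 / 4) * max (1/5 - (Int.fract x - 1/2) ^ 2) 0

/-- The tensor product kink function `g_d`. -/
def kinkFnTensor (d : ℕ) (x : Fin d → ℝ) : ℝ := ∏ i, kinkFn (x i)


namespace KinkAux

def s : ℝ := Real.sqrt 5 / 5
def cc : ℝ := 15 * Real.sqrt 5 / 4
def a : ℝ := 1/2 - s
def b : ℝ := 1/2 + s

lemma s_sq : s ^ 2 = 1/5 := by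
  have h := Real.sq_sqrt (by norm_num : (5:ℝ) ≥ 0)
  simp only [s]; field_simp; nlinarith [h]

lemma s_pos : 0 < s := by
  have := Real.sqrt_pos.mpr (by norm_num : (5:ℝ) > 0); unfold s; positivity

lemma s_lb : 0.44 < s := by
  have h := Real.sq_sqrt (by norm_num : (5:ℝ) ≥ 0)
  have h0 := Real.sqrt_nonneg 5
  simp only [s]; nlinarith

lemma s_ub : s < 0.45 := by
  have h := Real.sq_sqrt (by norm_num : (5:ℝ) ≥ 0)
  have h0 := Real.sqrt_nonneg 5
  simp only [s]; nlinarith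

lemma cc_pos : 0 < cc := by
  have := Real.sqrt_pos.mpr (by norm_num : (5:ℝ) > 0); unfold cc; positivity

lemma cc_ub : cc ≤ 9 := by
  have h := Real.sq_sqrt (by norm_num : (5:ℝ) ≥ 0)
  have h0 := Real.sqrt_nonneg 5
  simp only [cc]; nlinarith

lemma kink_eq (x : ℝ) : kinkFn x = cc * max (1/5 - (Int.fract x - 1/2) ^ 2) 0 := rfl

lemma kink_nonneg (x : ℝ) : 0 ≤ kinkFn x := by
  rw [kink_eq]; exact mul_nonneg cc_pos.le (le_max_right _ _)

lemma kink_le_two (x : ℝ) : kinkFn x ≤ 2 := by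
  rw [kink_eq]
  have h1 : max (1/5 - (Int.fract x - 1/2) ^ 2) 0 ≤ 1/5 := by
    apply max_le (by nlinarith [sq_nonneg (Int.fract x - 1/2)]) (by norm_num)
  nlinarith [cc_pos, cc_ub, le_max_right (1/5 - (Int.fract x - 1/2) ^ 2) (0:ℝ)]

lemma kink_abs_le_two (x : ℝ) : |kinkFn x| ≤ 2 := by
  rw [abs_of_nonneg (kink_nonneg x)]; exact kink_le_two x

lemma measurable_kink : Measurable kinkFn := by
  apply Measurable.mul measurable_const
  exact (measurable_const.sub ((measurable_fract.sub measurable_const).pow_const 2)).max measurable_const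

/-- kinkFn vanishes on [b-1, a]. -/
lemma kink_zero₁ {t : ℝ} (h1 : b - 1 ≤ t) (h2 : t ≤ a) : kinkFn t = 0 := by
  have hs := s_pos; have hsu := s_ub; have hsl := s_lb; have hsq := s_sq
  have hq : (1/5 : ℝ) - (Int.fract t - 1/2) ^ 2 ≤ 0 := by
    rcases le_or_gt 0 t with ht | ht
    · have hf : Int.fract t = t := Int.fract_eq_self.mpr ⟨ht, by simp only [a, b] at h1 h2 ⊢; linarith⟩
      rw [hf]; simp only [a] at h2; nlinarith
    · have hfl : ⌊t⌋ = -1 := by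
        apply Int.floor_eq_iff.mpr
        constructor <;> push_cast <;> [skip; linarith]
        simp only [b] at h1; linarith
      have hf : Int.fract t = t + 1 := by rw [Int.fract, hfl]; push_cast; ring
      rw [hf]; simp only [b] at h1; nlinarith
  rw [kink_eq, max_eq_right hq, mul_zero]

/-- kinkFn vanishes on [b, a+1]. -/
lemma kink_zero₂ {t : ℝ} (h1 : b ≤ t) (h2 : t ≤ a + 1) : kinkFn t = 0 := by
  have hs := s_pos; have hsu := s_ub; have hsl := s_lb; have hsq := s_sq
  have hq : (1/5 : ℝ) - (Int.fract t - 1/2) ^ 2 ≤ 0 := by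
    rcases lt_or_ge t 1 with ht | ht
    · have hf : Int.fract t = t := Int.fract_eq_self.mpr ⟨by simp only [b] at h1; linarith, ht⟩
      rw [hf]; simp only [b] at h1; nlinarith
    · have hfl : ⌊t⌋ = 1 := by
        apply Int.floor_eq_iff.mpr
        constructor <;> push_cast <;> [linarith; skip]
        simp only [a] at h2; linarith
      have hf : Int.fract t = t - 1 := by rw [Int.fract, hfl]; push_cast; ring
      rw [hf]; simp only [a] at h2; nlinarith
  rw [kink_eq, max_eq_right hq, mul_zero]

/-- kinkFn is the quadratic on [a, b]. -/
lemma kink_quad {t : ℝ} (h1 : a ≤ t) (h2 : t ≤ b) :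
    kinkFn t = cc * (1/5 - (t - 1/2) ^ 2) := by
  have hs := s_pos; have hsu := s_ub; have hsl := s_lb; have hsq := s_sq
  have hf : Int.fract t = t := Int.fract_eq_self.mpr
    ⟨by simp only [a] at h1; linarith, by simp only [b] at h2; linarith⟩
  have hq : (0:ℝ) ≤ 1/5 - (t - 1/2) ^ 2 := by
    simp only [a, b] at h1 h2; nlinarith
  rw [kink_eq, hf, max_eq_left hq]

def phi (x : ℝ) : ℝ := max (1/5 - (x - 1/2) ^ 2) 0

lemma phi_zero {x : ℝ} (h : x ≤ a ∨ b ≤ x) : phi x = 0 := by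
  have hsq := s_sq; have hs := s_pos
  apply max_eq_right
  rcases h with h | h <;> simp only [a, b] at h <;> nlinarith


lemma phi_lip_aux {u v : ℝ} (huv : u ≤ v) : |phi u - phi v| ≤ 2 * s * |u - v| := by
  have hsq := s_sq; have hs := s_pos
  rw [show |u - v| = v - u by rw [abs_sub_comm]; exact abs_of_nonneg (sub_nonneg.mpr huv)]
  unfold phi
  rcases le_total (1/5 - (u - 1/2)^2) 0 with hu | hu <;>
    rcases le_total (1/5 - (v - 1/2)^2) 0 with hv | hv
  · rw [max_eq_right hu, max_eq_right hv]
    simp only [sub_self, abs_zero]; nlinarith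
  · rw [max_eq_right hu, max_eq_left hv, zero_sub, abs_neg, abs_of_nonneg hv]
    nlinarith [sq_nonneg (v - 1/2 + s), sq_nonneg (v - 1/2 - s),
      sq_nonneg (u - 1/2 + s), sq_nonneg (u - 1/2 - s),
      mul_nonneg hv (sub_nonneg.mpr huv), mul_nonneg hs.le (sub_nonneg.mpr huv)]
  · rw [max_eq_left hu, max_eq_right hv, sub_zero, abs_of_nonneg hu]
    nlinarith [sq_nonneg (v - 1/2 + s), sq_nonneg (v - 1/2 - s),
      sq_nonneg (u - 1/2 + s), sq_nonneg (u - 1/2 - s),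
      mul_nonneg hu (sub_nonneg.mpr huv), mul_nonneg hs.le (sub_nonneg.mpr huv)]
  · rw [max_eq_left hu, max_eq_left hv]
    have hua : 1/2 - s ≤ u := by nlinarith
    have hvb : v ≤ 1/2 + s := by nlinarith
    have e : |1/5 - (u - 1/2)^2 - (1/5 - (v - 1/2)^2)| = |(v - u) * (u + v - 1)| := by
      congr 1; ring
    rw [e, abs_mul, abs_of_nonneg (sub_nonneg.mpr huv)]
    have h2 : |u + v - 1| ≤ 2 * s := by
      rw [abs_le]; constructor <;> nlinarith
    nlinarith [abs_nonneg (u + v - 1), sub_nonneg.mpr huv]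

lemma phi_lip (u v : ℝ) : |phi u - phi v| ≤ 2 * s * |u - v| := by
  rcases le_total u v with h | h
  · exact phi_lip_aux h
  · rw [abs_sub_comm, abs_sub_comm u v]; exact phi_lip_aux h

/-- Representation of kinkFn on [-1, 2]. -/
lemma kink_rep {t : ℝ} (h1 : -1 ≤ t) (h2 : t ≤ 2) :
    kinkFn t = cc * (phi (t + 1) + phi t + phi (t - 1)) := by
  have hsq := s_sq; have hs := s_pos; have hsl := s_lb; have hsu := s_ub
  have ha : a = 1/2 - s := rfl
  have hb : b = 1/2 + s := rfl
  rcases lt_or_ge t 0 with ht0 | ht0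
  · -- t ∈ [-1, 0): fract t = t + 1
    have hfl : ⌊t⌋ = -1 := by
      apply Int.floor_eq_iff.mpr; constructor <;> push_cast <;> linarith
    have hf : Int.fract t = t + 1 := by rw [Int.fract, hfl]; push_cast; ring
    have z1 : phi t = 0 := phi_zero (Or.inl (by rw [ha]; linarith))
    have z2 : phi (t - 1) = 0 := phi_zero (Or.inl (by rw [ha]; linarith))
    rw [kink_eq, hf, z1, z2]; unfold phi; ring
  rcases lt_or_ge t 1 with ht1 | ht1
  · have hf : Int.fract t = t := Int.fract_eq_self.mpr ⟨ht0, ht1⟩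
    have z1 : phi (t + 1) = 0 := phi_zero (Or.inr (by rw [hb]; linarith))
    have z2 : phi (t - 1) = 0 := phi_zero (Or.inl (by rw [ha]; linarith))
    rw [kink_eq, hf, z1, z2]; unfold phi; ring
  rcases lt_or_ge t 2 with ht2 | ht2
  · have hfl : ⌊t⌋ = 1 := by
      apply Int.floor_eq_iff.mpr; constructor <;> push_cast <;> linarith
    have hf : Int.fract t = t - 1 := by rw [Int.fract, hfl]; push_cast; ring
    have z1 : phi (t + 1) = 0 := phi_zero (Or.inr (by rw [hb]; linarith))
    have z2 : phi t = 0 := phi_zero (Or.inr (by rw [hb]; linarith))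
    rw [kink_eq, hf, z1, z2]; unfold phi; ring
  · have ht : t = 2 := le_antisymm h2 ht2
    subst ht
    have hf : Int.fract (2:ℝ) = 0 := by
      rw [show ((2:ℝ)) = ((2:ℤ):ℝ) by norm_num, Int.fract_intCast]
    have z1 : phi (2 + 1) = 0 := phi_zero (Or.inr (by rw [hb]; linarith))
    have z2 : phi 2 = 0 := phi_zero (Or.inr (by rw [hb]; linarith))
    have z3 : phi (2 - 1) = 0 := phi_zero (Or.inr (by rw [hb]; linarith))
    rw [kink_eq, hf, z1, z2, z3]
    have : (1/5 - ((0:ℝ) - 1/2)^2) ≤ 0 := by norm_num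
    rw [max_eq_right this]; ring

lemma cc_mul_s : cc * s = 15/4 := by
  have h := Real.sq_sqrt (by norm_num : (5:ℝ) ≥ 0)
  simp only [cc, s]; nlinarith

/-- Local Lipschitz bound for kinkFn on [-1,2]. -/
lemma kink_lip {u v : ℝ} (hu1 : -1 ≤ u) (hu2 : u ≤ 2) (hv1 : -1 ≤ v) (hv2 : v ≤ 2) :
    |kinkFn u - kinkFn v| ≤ 45 / 2 * |u - v| := by
  have hsq := s_sq; have hs := s_pos; have hsl := s_lb; have hsu := s_ub
  have hcc := cc_pos; have hccu := cc_ub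
  rw [kink_rep hu1 hu2, kink_rep hv1 hv2]
  have : cc * (phi (u+1) + phi u + phi (u-1)) - cc * (phi (v+1) + phi v + phi (v-1))
      = cc * ((phi (u+1) - phi (v+1)) + (phi u - phi v) + (phi (u-1) - phi (v-1))) := by ring
  rw [this, abs_mul, abs_of_nonneg hcc.le]
  have l1 := phi_lip (u+1) (v+1)
  have l2 := phi_lip u v
  have l3 := phi_lip (u-1) (v-1)
  have e1 : |u + 1 - (v + 1)| = |u - v| := by congr 1; ring
  have e3 : |u - 1 - (v - 1)| = |u - v| := by congr 1; ring
  rw [e1] at l1; rw [e3] at l3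
  have habs : |phi (u+1) - phi (v+1) + (phi u - phi v) + (phi (u-1) - phi (v-1))|
      ≤ 6 * s * |u - v| := by
    calc |phi (u+1) - phi (v+1) + (phi u - phi v) + (phi (u-1) - phi (v-1))|
        ≤ |phi (u+1) - phi (v+1) + (phi u - phi v)| + |phi (u-1) - phi (v-1)| := abs_add_le _ _
      _ ≤ |phi (u+1) - phi (v+1)| + |phi u - phi v| + |phi (u-1) - phi (v-1)| := by
          gcongr; exact abs_add_le _ _
      _ ≤ 6 * s * |u - v| := by nlinarith
  calc cc * |phi (u+1) - phi (v+1) + (phi u - phi v) + (phi (u-1) - phi (v-1))|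
      ≤ cc * (6 * s * |u - v|) := by gcongr
    _ ≤ 45 / 2 * |u - v| := by nlinarith [abs_nonneg (u - v), cc_mul_s]

lemma intervalIntegrable_kink (u v : ℝ) : IntervalIntegrable kinkFn volume u v := by
  rw [intervalIntegrable_iff]
  apply (integrableOn_const (C := (2:ℝ)) measure_Ioc_lt_top.ne).mono' 
    (measurable_kink.aestronglyMeasurable)
  exact ae_of_all _ fun t => by rw [Real.norm_eq_abs]; exact kink_abs_le_two t

lemma cc_mul : cc * (4 * s / 15) = 1 := by
  have h := Real.sq_sqrt (by norm_num : (5:ℝ) ≥ 0)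
  have h0 := Real.sqrt_nonneg 5
  simp only [cc, s]; nlinarith

lemma integral_kink : ∫ t in (0:ℝ)..1, kinkFn t = 1 := by
  have hs := s_pos; have hsu := s_ub; have hsl := s_lb; have hsq := s_sq
  have hab : a ≤ b := by simp only [a, b]; linarith
  have h0a : (0:ℝ) ≤ a := by simp only [a]; linarith
  have hb1 : b ≤ 1 := by simp only [b]; linarith
  have split1 : ∫ t in (0:ℝ)..1, kinkFn t =
      (∫ t in (0:ℝ)..a, kinkFn t) + (∫ t in a..b, kinkFn t) + (∫ t in b..1, kinkFn t) := by
    rw [intervalIntegral.integral_add_adjacent_intervals (intervalIntegrable_kink 0 a)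
      (intervalIntegrable_kink a b),
      intervalIntegral.integral_add_adjacent_intervals
      (((intervalIntegrable_kink 0 a).trans (intervalIntegrable_kink a b)))
      (intervalIntegrable_kink b 1)]
  have e1 : ∫ t in (0:ℝ)..a, kinkFn t = 0 := by
    rw [intervalIntegral.integral_congr (g := fun _ => (0:ℝ)), intervalIntegral.integral_zero]
    intro t ht
    rw [Set.uIcc_of_le h0a] at ht
    exact kink_zero₁ (by simp only [b]; linarith [ht.1]) ht.2
  have e3 : ∫ t in b..1, kinkFn t = 0 := by
    rw [intervalIntegral.integral_congr (g := fun _ => (0:ℝ)), intervalIntegral.integral_zero]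
    intro t ht
    rw [Set.uIcc_of_le hb1] at ht
    exact kink_zero₂ ht.1 (by simp only [a]; linarith [ht.2])
  have e2 : ∫ t in a..b, kinkFn t = 1 := by
    rw [intervalIntegral.integral_congr (g := fun t => cc * (1/5 - (t - 1/2)^2))]
    · rw [intervalIntegral.integral_const_mul]
      have hi1 : IntervalIntegrable (fun _ : ℝ => (1:ℝ)/5) volume a b :=
        intervalIntegrable_const
      have hi2 : IntervalIntegrable (fun t : ℝ => (t - 1/2)^2) volume a b := by
        apply Continuous.intervalIntegrable; continuity
      rw [show (fun t : ℝ => 1/5 - (t - 1/2)^2) = fun t : ℝ => (fun _ => (1:ℝ)/5) t - (fun t : ℝ => (t-1/2)^2) t from rfl,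
        intervalIntegral.integral_sub hi1 hi2]
      have hsq3 : ∫ t in a..b, (t - 1/2)^2 = (s^3 - (-s)^3)/3 := by
        rw [intervalIntegral.integral_comp_sub_right (fun t => t^2) (1/2)]
        simp only [a, b]
        rw [integral_pow]
        norm_num
      rw [hsq3, intervalIntegral.integral_const]
      have : ((b - a) • (1/5) - (s^3 - (-s)^3)/3 : ℝ) = 4 * s / 15 := by
        simp only [a, b, smul_eq_mul]; linear_combination (-(2:ℝ)/3*s) * hsq
      rw [this, cc_mul]
    · intro t ht
      rw [Set.uIcc_of_le hab] at ht
      exact kink_quad ht.1 ht.2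
  rw [split1, e1, e2, e3]; ring

lemma integral_kink_Icc : ∫ t in Set.Icc (0:ℝ) 1, kinkFn t = 1 := by
  have h := integral_kink
  rwa [intervalIntegral.integral_of_le (by norm_num : (0:ℝ) ≤ 1),
    ← integral_Icc_eq_integral_Ioc] at h

lemma integral_abs_kink_Icc : ∫ t in Set.Icc (0:ℝ) 1, |kinkFn t| = 1 := by
  rw [integral_congr_ae (ae_of_all _ fun t => abs_of_nonneg (kink_nonneg t))]
  exact integral_kink_Icc

/-- The univariate m-th difference. -/
def diff1 (m : ℕ) (h : ℝ) (u : ℝ → ℝ) : ℝ → ℝ := fun t =>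
  ∑ l ∈ Finset.range (m + 1), (-1 : ℝ) ^ (m - l) * (m.choose l) * u (t + l * h)

lemma diff1_three (h : ℝ) (u : ℝ → ℝ) (t : ℝ) :
    diff1 3 h u t = -u t + 3 * u (t + h) - 3 * u (t + 2*h) + u (t + 3*h) := by
  simp only [diff1, Finset.sum_range_succ, Finset.sum_range_zero]
  norm_num
  ring_nf

lemma measurable_diff1_kink (h : ℝ) : Measurable (diff1 3 h kinkFn) := by
  unfold diff1
  apply Finset.measurable_sum
  intro l _
  exact measurable_const.mul (measurable_kink.comp (measurable_id.add_const _))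

lemma diff1_kink_abs_le (h t : ℝ) : |diff1 3 h kinkFn t| ≤ 16 := by
  rw [diff1_three]
  have b0 := kink_abs_le_two t
  have b1 := kink_abs_le_two (t + h)
  have b2 := kink_abs_le_two (t + 2*h)
  have b3 := kink_abs_le_two (t + 3*h)
  rw [abs_le] at *
  constructor <;> nlinarith [b0.1, b0.2, b1.1, b1.2, b2.1, b2.2, b3.1, b3.2]

/-- Third difference of kinkFn vanishes away from the kinks. -/
lemma diff1_kink_eq_zero {h t : ℝ} (hh : |h| ≤ 1/4) (ht0 : 0 ≤ t) (ht1 : t ≤ 1)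
    (g1 : 3 * |h| ≤ |t - (b - 1)|) (g2 : 3 * |h| ≤ |t - a|)
    (g3 : 3 * |h| ≤ |t - b|) (g4 : 3 * |h| ≤ |t - (a + 1)|) :
    diff1 3 h kinkFn t = 0 := by
  have hsq := s_sq; have hs := s_pos; have hsl := s_lb; have hsu := s_ub
  have hb1 : b - 1 < 0 := by simp only [b]; linarith
  have ha1 : 1 < a + 1 := by simp only [a]; linarith
  have habs : ∀ l : ℝ, 0 ≤ l → l ≤ 3 → |l * h| ≤ 3 * |h| := by
    intro l h0 h3; rw [abs_mul, abs_of_nonneg h0]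
    nlinarith [abs_nonneg h]
  have hg1 : b - 1 + 3 * |h| ≤ t := by
    rw [abs_of_nonneg (by linarith : 0 ≤ t - (b-1))] at g1; linarith
  have hg4 : t ≤ a + 1 - 3 * |h| := by
    rw [abs_of_nonpos (by linarith : t - (a+1) ≤ 0)] at g4; linarith
  rw [diff1_three]
  have key : ∀ l : ℝ, 0 ≤ l → l ≤ 3 →
      b - 1 + 3*|h| ≤ t + l*h + 3*|h| ∧ t + l*h ≤ a + 1 - 3*|h| + 3*|h| := by
    intro l h0 h3
    have := habs l h0 h3
    have := abs_le.mp this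
    constructor <;> linarith
  rcases le_abs.mp g2 with h2 | h2
  · -- t ≥ a + 3|h| : points above a
    rcases le_abs.mp g3 with h3 | h3
    · -- t ≥ b + 3|h| : zero region [b, a+1]
      have z : ∀ l : ℝ, 0 ≤ l → l ≤ 3 → kinkFn (t + l*h) = 0 := by
        intro l h0 h3'
        have hb := abs_le.mp (habs l h0 h3')
        apply kink_zero₂ (by linarith) (by linarith)
      have z0 := z 0 (by norm_num) (by norm_num)
      have z1 := z 1 (by norm_num) (by norm_num)
      have z2 := z 2 (by norm_num) (by norm_num)
      have z3 := z 3 (by norm_num) (by norm_num)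
      rw [show t + (0:ℝ)*h = t by ring] at z0
      rw [show t + (1:ℝ)*h = t + h by ring] at z1
      rw [z0, z1, z2, z3]; ring
    · -- t ≤ b - 3|h| : quadratic region [a, b]
      have q : ∀ l : ℝ, 0 ≤ l → l ≤ 3 → kinkFn (t + l*h) = cc * (1/5 - (t + l*h - 1/2)^2) := by
        intro l h0 h3'
        have hb := abs_le.mp (habs l h0 h3')
        apply kink_quad (by linarith) (by linarith)
      have q0 := q 0 (by norm_num) (by norm_num)
      have q1 := q 1 (by norm_num) (by norm_num)
      have q2 := q 2 (by norm_num) (by norm_num)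
      have q3 := q 3 (by norm_num) (by norm_num)
      rw [show t + (0:ℝ)*h = t by ring] at q0
      rw [show t + (1:ℝ)*h = t + h by ring] at q1
      rw [q0, q1, q2, q3]; ring
  · -- t ≤ a - 3|h| : zero region [b-1, a]
    have z : ∀ l : ℝ, 0 ≤ l → l ≤ 3 → kinkFn (t + l*h) = 0 := by
      intro l h0 h3'
      have hb := abs_le.mp (habs l h0 h3')
      apply kink_zero₁ (by linarith) (by linarith)
    have z0 := z 0 (by norm_num) (by norm_num)
    have z1 := z 1 (by norm_num) (by norm_num)
    have z2 := z 2 (by norm_num) (by norm_num)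
    have z3 := z 3 (by norm_num) (by norm_num)
    rw [show t + (0:ℝ)*h = t by ring] at z0
    rw [show t + (1:ℝ)*h = t + h by ring] at z1
    rw [z0, z1, z2, z3]; ring

/-- Pointwise bound via Lipschitz estimate. -/
lemma diff1_kink_abs_le_lip {h t : ℝ} (hh : |h| ≤ 1/4) (ht0 : 0 ≤ t) (ht1 : t ≤ 1) :
    |diff1 3 h kinkFn t| ≤ 90 * |h| := by
  have hab := abs_le.mp hh
  have mem : ∀ l : ℝ, 0 ≤ l → l ≤ 3 → -1 ≤ t + l*h ∧ t + l*h ≤ 2 := by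
    intro l h0 h3
    constructor <;> nlinarith
  have m0 := mem 0 (by norm_num) (by norm_num)
  have m1 := mem 1 (by norm_num) (by norm_num)
  have m2 := mem 2 (by norm_num) (by norm_num)
  have m3 := mem 3 (by norm_num) (by norm_num)
  rw [show t + (0:ℝ)*h = t by ring] at m0
  rw [show t + (1:ℝ)*h = t + h by ring] at m1
  have l1 := kink_lip m1.1 m1.2 m0.1 m0.2
  have l2 := kink_lip m2.1 m2.2 m1.1 m1.2
  have l3 := kink_lip m3.1 m3.2 m2.1 m2.2
  rw [show t + h - t = h by ring] at l1
  rw [show t + 2*h - (t + h) = h by ring] at l2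
  rw [show t + 3*h - (t + 2*h) = h by ring] at l3
  rw [diff1_three]
  have e : -kinkFn t + 3 * kinkFn (t + h) - 3 * kinkFn (t + 2*h) + kinkFn (t + 3*h)
      = (kinkFn (t+3*h) - kinkFn (t+2*h)) - 2*(kinkFn (t+2*h) - kinkFn (t+h))
        + (kinkFn (t+h) - kinkFn t) := by ring
  rw [e]
  have := abs_le.mp l1; have := abs_le.mp l2; have := abs_le.mp l3
  rw [abs_le]
  constructor <;> nlinarith [abs_le.mp l1, abs_le.mp l2, abs_le.mp l3, abs_nonneg h]

lemma integrableOn_diff1 (h : ℝ) :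
    IntegrableOn (fun t => |diff1 3 h kinkFn t|) (Set.Icc (0:ℝ) 1) volume := by
  apply (integrableOn_const (C := (16:ℝ)) (by rw [Real.volume_Icc]; norm_num)).mono'
    ((measurable_diff1_kink h).abs.aestronglyMeasurable.restrict)
  exact ae_of_all _ fun t => by
    rw [Real.norm_eq_abs, abs_abs]; exact diff1_kink_abs_le h t

lemma integral_abs_diff1_le_crude (h : ℝ) :
    ∫ t in Set.Icc (0:ℝ) 1, |diff1 3 h kinkFn t| ≤ 16 := by
  have : ∫ t in Set.Icc (0:ℝ) 1, |diff1 3 h kinkFn t|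
      ≤ ∫ _t in Set.Icc (0:ℝ) 1, (16:ℝ) := by
    apply setIntegral_mono_on (integrableOn_diff1 h)
      (integrableOn_const (by rw [Real.volume_Icc]; norm_num))
      measurableSet_Icc
    exact fun t _ => diff1_kink_abs_le h t
  calc _ ≤ ∫ _t in Set.Icc (0:ℝ) 1, (16:ℝ) := this
    _ = 16 := by rw [setIntegral_const, Real.volume_real_Icc]; norm_num

/-- piece : indicator of an interval around a kink. -/
def piece (k H t : ℝ) : ℝ := (Set.Ioo (k - 3*H) (k + 3*H)).indicator (fun _ => 90 * H) t

lemma piece_nonneg {k H t : ℝ} (hH : 0 ≤ H) : 0 ≤ piece k H t := by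
  unfold piece; apply Set.indicator_nonneg; intro _ _; positivity

lemma integrableOn_piece (k H : ℝ) :
    IntegrableOn (piece k H) (Set.Icc (0:ℝ) 1) volume := by
  unfold piece
  apply Integrable.indicator _ measurableSet_Ioo
  exact integrableOn_const (by rw [Real.volume_Icc]; norm_num)

lemma integral_piece_le (k H : ℝ) (hH : 0 ≤ H) :
    ∫ t in Set.Icc (0:ℝ) 1, piece k H t ≤ 540 * H ^ 2 := by
  unfold piece
  rw [setIntegral_indicator measurableSet_Ioo, setIntegral_const, smul_eq_mul]
  have hv : (volume (Set.Icc (0:ℝ) 1 ∩ Set.Ioo (k - 3*H) (k + 3*H))).toReal ≤ 6 * H := by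
    have h1 : volume (Set.Icc (0:ℝ) 1 ∩ Set.Ioo (k - 3*H) (k + 3*H))
        ≤ volume (Set.Ioo (k - 3*H) (k + 3*H)) := measure_mono Set.inter_subset_right
    rw [Real.volume_Ioo] at h1
    calc (volume (Set.Icc (0:ℝ) 1 ∩ Set.Ioo (k - 3*H) (k + 3*H))).toReal
        ≤ (ENNReal.ofReal (k + 3*H - (k - 3*H))).toReal :=
          ENNReal.toReal_mono ENNReal.ofReal_ne_top h1
      _ ≤ 6 * H := by rw [ENNReal.toReal_ofReal (by linarith)]; linarith
  rw [measureReal_def]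
  nlinarith [ENNReal.toReal_nonneg (a := volume (Set.Icc (0:ℝ) 1 ∩ Set.Ioo (k - 3*H) (k + 3*H)))]

lemma integral_abs_diff1_le_fine {h : ℝ} (hh : |h| ≤ 1/4) :
    ∫ t in Set.Icc (0:ℝ) 1, |diff1 3 h kinkFn t| ≤ 2160 * h ^ 2 := by
  set H := |h| with hH
  have hH0 : 0 ≤ H := abs_nonneg h
  have hmono : ∫ t in Set.Icc (0:ℝ) 1, |diff1 3 h kinkFn t|
      ≤ ∫ t in Set.Icc (0:ℝ) 1,
        (piece (b-1) H t + piece a H t + piece b H t + piece (a+1) H t) := by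
    apply setIntegral_mono_on (integrableOn_diff1 h)
      (((((integrableOn_piece (b-1) H).add (integrableOn_piece a H)).add
        (integrableOn_piece b H)).add (integrableOn_piece (a+1) H)))
      measurableSet_Icc
    intro t ht
    show |diff1 3 h kinkFn t| ≤ piece (b-1) H t + piece a H t + piece b H t + piece (a+1) H t
    by_cases hbad : 3 * H ≤ |t - (b-1)| ∧ 3 * H ≤ |t - a| ∧ 3 * H ≤ |t - b| ∧ 3 * H ≤ |t - (a+1)|
    · rw [diff1_kink_eq_zero hh ht.1 ht.2 hbad.1 hbad.2.1 hbad.2.2.1 hbad.2.2.2, abs_zero]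
      have := piece_nonneg (k := b-1) (t := t) hH0
      have := piece_nonneg (k := a) (t := t) hH0
      have := piece_nonneg (k := b) (t := t) hH0
      have := piece_nonneg (k := a+1) (t := t) hH0
      linarith
    · push_neg at hbad
      have hle := diff1_kink_abs_le_lip hh ht.1 ht.2
      have key : ∀ k : ℝ, |t - k| < 3 * H → piece k H t = 90 * H := by
        intro k hk
        unfold piece
        rw [Set.indicator_of_mem]
        rw [Set.mem_Ioo]
        have := abs_lt.mp hk
        constructor <;> linarith [this.1, this.2]
      rcases lt_or_ge (|t - (b-1)|) (3*H) with hk | hk1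
      · have := key _ hk
        have := piece_nonneg (k := a) (t := t) hH0
        have := piece_nonneg (k := b) (t := t) hH0
        have := piece_nonneg (k := a+1) (t := t) hH0
        linarith
      rcases lt_or_ge (|t - a|) (3*H) with hk | hk2
      · have := key _ hk
        have := piece_nonneg (k := b-1) (t := t) hH0
        have := piece_nonneg (k := b) (t := t) hH0
        have := piece_nonneg (k := a+1) (t := t) hH0
        linarith
      rcases lt_or_ge (|t - b|) (3*H) with hk | hk3
      · have := key _ hk
        have := piece_nonneg (k := b-1) (t := t) hH0
        have := piece_nonneg (k := a) (t := t) hH0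
        have := piece_nonneg (k := a+1) (t := t) hH0
        linarith
      rcases lt_or_ge (|t - (a+1)|) (3*H) with hk | hk4
      · have := key _ hk
        have := piece_nonneg (k := b-1) (t := t) hH0
        have := piece_nonneg (k := a) (t := t) hH0
        have := piece_nonneg (k := b) (t := t) hH0
        linarith
      · exact absurd (hbad hk1 hk2 hk3) (not_lt.mpr hk4)
  have hsplit : ∫ t in Set.Icc (0:ℝ) 1,
      (piece (b-1) H t + piece a H t + piece b H t + piece (a+1) H t)
      ≤ 2160 * h ^ 2 := by
    have hadd1 : ∫ t in Set.Icc (0:ℝ) 1, (piece (b-1) H t + piece a H t)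
        = (∫ t in Set.Icc (0:ℝ) 1, piece (b-1) H t) + ∫ t in Set.Icc (0:ℝ) 1, piece a H t :=
      integral_add (integrableOn_piece _ _) (integrableOn_piece _ _)
    have hadd2 : ∫ t in Set.Icc (0:ℝ) 1, (piece (b-1) H t + piece a H t + piece b H t)
        = (∫ t in Set.Icc (0:ℝ) 1, (piece (b-1) H t + piece a H t))
          + ∫ t in Set.Icc (0:ℝ) 1, piece b H t :=
      integral_add ((integrableOn_piece _ _).add (integrableOn_piece _ _)) (integrableOn_piece _ _)
    have hadd3 : ∫ t in Set.Icc (0:ℝ) 1,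
          (piece (b-1) H t + piece a H t + piece b H t + piece (a+1) H t)
        = (∫ t in Set.Icc (0:ℝ) 1, (piece (b-1) H t + piece a H t + piece b H t))
          + ∫ t in Set.Icc (0:ℝ) 1, piece (a+1) H t :=
      integral_add (((integrableOn_piece _ _).add (integrableOn_piece _ _)).add
        (integrableOn_piece _ _)) (integrableOn_piece _ _)
    rw [hadd3, hadd2, hadd1]
    have e : (2160:ℝ) * h ^ 2 = 540 * H^2 + 540 * H^2 + 540 * H^2 + 540 * H^2 := by
      rw [hH, sq_abs]; ring
    rw [e]
    gcongr <;> exact integral_piece_le _ _ hH0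
  linarith

variable {d : ℕ}

lemma coordDiff_tensor (m : ℕ) (i : Fin d) (h0 : ℝ) (u : Fin d → ℝ → ℝ) :
    coordDiff m i h0 (fun x => ∏ i', u i' (x i')) =
      fun x => ∏ i', Function.update u i (diff1 m h0 (u i)) i' (x i') := by
  funext x
  unfold coordDiff
  have inner : ∀ l : ℕ, (∏ i', u i' (Function.update x i (x i + l * h0) i'))
      = u i (x i + l * h0) * ∏ i' ∈ Finset.univ.erase i, u i' (x i') := by
    intro l
    rw [← Finset.mul_prod_erase Finset.univ _ (Finset.mem_univ i), Function.update_self]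
    congr 1
    apply Finset.prod_congr rfl
    intro i' hi'
    rw [Function.update_of_ne (Finset.ne_of_mem_erase hi')]
  have rhs : (∏ i', Function.update u i (diff1 m h0 (u i)) i' (x i'))
      = diff1 m h0 (u i) (x i) * ∏ i' ∈ Finset.univ.erase i, u i' (x i') := by
    rw [← Finset.mul_prod_erase Finset.univ _ (Finset.mem_univ i), Function.update_self]
    congr 1
    apply Finset.prod_congr rfl
    intro i' hi'
    rw [Function.update_of_ne (Finset.ne_of_mem_erase hi')]
  rw [rhs]
  simp only [inner, ← mul_assoc]
  rw [← Finset.sum_mul]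
  rfl

lemma foldr_coordDiff_tensor (m : ℕ) (h : Fin d → ℝ) (L : List (Fin d)) (hL : L.Nodup)
    (u : Fin d → ℝ → ℝ) :
    L.foldr (fun i g => coordDiff m i (h i) g) (fun x => ∏ i', u i' (x i')) =
      fun x => ∏ i', (if i' ∈ L then diff1 m (h i') (u i') else u i') (x i') := by
  induction L generalizing u with
  | nil => simp
  | cons i L' ih =>
    have hnd := List.nodup_cons.mp hL
    rw [List.foldr_cons, ih hnd.2 u, coordDiff_tensor]
    funext x
    apply Finset.prod_congr rfl
    intro i' _
    by_cases hii : i' = i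
    · subst hii
      rw [Function.update_self]
      simp only [List.mem_cons, true_or, if_true]
      have : i' ∉ L' := hnd.1
      rw [if_neg this]
    · rw [Function.update_of_ne hii]
      simp only [List.mem_cons]
      by_cases hmem : i' ∈ L'
      · rw [if_pos hmem, if_pos (Or.inr hmem)]
      · rw [if_neg hmem, if_neg (by tauto)]

lemma mixedDiff_tensor (m : ℕ) (e : Finset (Fin d)) (h : Fin d → ℝ) (u : Fin d → ℝ → ℝ) :
    mixedDiff m e h (fun x => ∏ i', u i' (x i')) =
      fun x => ∏ i', (if i' ∈ e then diff1 m (h i') (u i') else u i') (x i') := by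
  unfold mixedDiff
  rw [foldr_coordDiff_tensor m h _ (e.sort_nodup (· ≤ ·)) u]
  funext x
  apply Finset.prod_congr rfl
  intro i' _
  simp only [Finset.mem_sort]

/-- Indicator of the unit cube factorizes. -/
lemma indicator_unitCube (F : Fin d → ℝ → ℝ) (x : Fin d → ℝ) :
    (unitCube d).indicator (fun x => ∏ i, F i (x i)) x
      = ∏ i, (Set.Icc (0:ℝ) 1).indicator (F i) (x i) := by
  by_cases hx : x ∈ unitCube d
  · rw [Set.indicator_of_mem hx]
    apply Finset.prod_congr rfl
    intro i _
    rw [Set.indicator_of_mem (by exact hx i (Set.mem_univ i))]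
  · rw [Set.indicator_of_notMem hx]
    have hx' := hx
    simp only [unitCube, Set.mem_univ_pi, not_forall] at hx'
    obtain ⟨i, hi⟩ := hx'
    exact (Finset.prod_eq_zero (Finset.mem_univ i)
      (by rw [Set.indicator_of_notMem hi])).symm

lemma measurableSet_unitCube : MeasurableSet (unitCube d) :=
  MeasurableSet.univ_pi fun _ => measurableSet_Icc

/-- Key factorization of the restricted integral of a tensor product. -/
lemma integral_unitCube_tensor (F : Fin d → ℝ → ℝ) (hm : ∀ i, Measurable (F i))
    (hb : ∀ i t, |F i t| ≤ 16) :
    ∫ x in unitCube d, ∏ i, F i (x i) = ∏ i, ∫ t in Set.Icc (0:ℝ) 1, F i t := by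
  have hint : ∀ i, Integrable ((Set.Icc (0:ℝ) 1).indicator (F i)) volume := by
    intro i
    apply (IntegrableOn.integrable_indicator · measurableSet_Icc)
    apply (integrableOn_const (C := (16:ℝ)) (by rw [Real.volume_Icc]; norm_num)).mono'
      (hm i).aestronglyMeasurable.restrict
    exact ae_of_all _ fun t => by rw [Real.norm_eq_abs]; exact hb i t
  rw [← integral_indicator measurableSet_unitCube]
  calc ∫ x, (unitCube d).indicator (fun x => ∏ i, F i (x i)) x
      = ∫ x : Fin d → ℝ, ∏ i, (Set.Icc (0:ℝ) 1).indicator (F i) (x i) := by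
        congr 1; funext x; exact indicator_unitCube F x
    _ = ∏ i, ∫ t, (Set.Icc (0:ℝ) 1).indicator (F i) t :=
        integral_fintype_prod_eq_prod (f := fun i => (Set.Icc (0:ℝ) 1).indicator (F i))
    _ = ∏ i, ∫ t in Set.Icc (0:ℝ) 1, F i t := by
        apply Finset.prod_congr rfl
        intro i _
        rw [integral_indicator measurableSet_Icc]

lemma torusLp_one_tensor (F : Fin d → ℝ → ℝ) (hm : ∀ i, Measurable (F i))
    (hb : ∀ i t, |F i t| ≤ 16) :
    torusLp 1 (fun x => ∏ i, F i (x i)) =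
      ENNReal.ofReal (∏ i, ∫ t in Set.Icc (0:ℝ) 1, |F i t|) := by
  have hind : Integrable (fun x : Fin d → ℝ => ∏ i, (Set.Icc (0:ℝ) 1).indicator (F i) (x i)) := by
    apply Integrable.fintype_prod (f := fun i => (Set.Icc (0:ℝ) 1).indicator (F i))
    intro i
    apply (IntegrableOn.integrable_indicator · measurableSet_Icc)
    apply (integrableOn_const (C := (16:ℝ)) (by rw [Real.volume_Icc]; norm_num)).mono'
      (hm i).aestronglyMeasurable.restrict
    exact ae_of_all _ fun t => by rw [Real.norm_eq_abs]; exact hb i t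
  have hind2 : Integrable ((unitCube d).indicator fun x => ∏ i, F i (x i)) volume := by
    have e : (unitCube d).indicator (fun x => ∏ i, F i (x i))
        = fun x => ∏ i, (Set.Icc (0:ℝ) 1).indicator (F i) (x i) :=
      funext fun x => indicator_unitCube F x
    rw [e]; exact hind
  have hint : Integrable (fun x => ∏ i, F i (x i)) (volume.restrict (unitCube d)) :=
    (integrable_indicator_iff measurableSet_unitCube).mp hind2
  unfold torusLp
  rw [eLpNorm_one_eq_lintegral_enorm, ← ofReal_integral_norm_eq_lintegral_enorm hint]
  congr 1
  calc ∫ x in unitCube d, ‖∏ i, F i (x i)‖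
      = ∫ x in unitCube d, ∏ i, |F i (x i)| := by
        congr 1; funext x; rw [Real.norm_eq_abs, Finset.abs_prod]
    _ = ∏ i, ∫ t in Set.Icc (0:ℝ) 1, |F i t| := by
        apply integral_unitCube_tensor (fun i t => |F i t|) (fun i => (hm i).abs)
        intro i t; rw [abs_abs]; exact hb i t

theorem kink_part1 (d : ℕ) : (∫ x in unitCube d, kinkFnTensor d x) = 1 := by
  have : (∫ x in unitCube d, kinkFnTensor d x)
      = ∏ _i : Fin d, ∫ t in Set.Icc (0:ℝ) 1, kinkFn t :=
    integral_unitCube_tensor (fun _ => kinkFn) (fun _ => measurable_kink)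
      (fun _ t => le_trans (kink_abs_le_two t) (by norm_num))
  rw [this, integral_kink_Icc, Finset.prod_const_one]

theorem kink_part2 (d : ℕ) : besovNorm d 3 2 1 ∞ (kinkFnTensor d) < ⊤ := by
  have key : ∀ (j : Fin d → ℕ),
      ENNReal.ofReal ((2:ℝ) ^ ((2:ℝ) * ∑ i, (j i : ℝ))) *
        omegaMod 3 (Finset.univ.filter fun i => j i ≠ 0) 1 (kinkFnTensor d)
          (fun i => (2:ℝ) ^ (-(j i : ℝ))) ≤ ENNReal.ofReal (2160 ^ d) := by
    intro j
    set e := Finset.univ.filter fun i => j i ≠ 0 with he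
    unfold omegaMod
    rw [ENNReal.mul_iSup]
    apply iSup_le; intro h
    rw [ENNReal.mul_iSup]
    apply iSup_le; intro hcon
    -- tensor structure
    have hmd : mixedDiff 3 e h (kinkFnTensor d) =
        fun x => ∏ i', (if i' ∈ e then diff1 3 (h i') kinkFn else kinkFn) (x i') := by
      have := mixedDiff_tensor 3 e h (fun _ => kinkFn)
      exact this
    set F : Fin d → ℝ → ℝ := fun i => if i ∈ e then diff1 3 (h i) kinkFn else kinkFn with hF
    have hm : ∀ i, Measurable (F i) := by
      intro i; rw [hF]; dsimp only
      split_ifs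
      · exact measurable_diff1_kink _
      · exact measurable_kink
    have hb : ∀ i t, |F i t| ≤ 16 := by
      intro i t; rw [hF]; dsimp only
      split_ifs
      · exact diff1_kink_abs_le _ _
      · exact le_trans (kink_abs_le_two t) (by norm_num)
    have htp : torusLp 1 (mixedDiff 3 e h (kinkFnTensor d)) =
        ENNReal.ofReal (∏ i, ∫ t in Set.Icc (0:ℝ) 1, |F i t|) := by
      rw [hmd]; exact torusLp_one_tensor F hm hb
    rw [htp, ← ENNReal.ofReal_mul (by positivity)]
    apply ENNReal.ofReal_le_ofReal
    -- real inequality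
    set I : Fin d → ℝ := fun i => ∫ t in Set.Icc (0:ℝ) 1, |F i t| with hI
    have hInonneg : ∀ i, 0 ≤ I i := fun i =>
      integral_nonneg fun t => abs_nonneg _
    have hcoef : (2:ℝ) ^ ((2:ℝ) * ∑ i, (j i : ℝ)) = ∏ i, (2:ℝ) ^ (2 * j i) := by
      have e1 : ((2:ℝ)) ^ ((2:ℝ) * ∑ i, (j i : ℝ)) = (2:ℝ) ^ (((∑ i, 2 * j i : ℕ)) : ℝ) := by
        congr 1; push_cast; rw [Finset.mul_sum]
      rw [e1, Real.rpow_natCast, ← Finset.prod_pow_eq_pow_sum]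
    rw [hcoef, ← Finset.prod_mul_distrib]
    have hfac : ∀ i : Fin d, (2:ℝ) ^ (2 * j i) * I i ≤ 2160 := by
      intro i
      rcases Nat.eq_zero_or_pos (j i) with hj0 | hjpos
      · have hie : i ∉ e := by
          rw [he]; simp [hj0]
        have : I i = 1 := by
          rw [hI]; dsimp only; rw [hF]; dsimp only; rw [if_neg hie]
          exact integral_abs_kink_Icc
        rw [this, hj0]; norm_num
      · have hie : i ∈ e := by
          rw [he]; simp [Nat.pos_iff_ne_zero.mp hjpos]
        have hcon' : |h i| < (2:ℝ) ^ (-(j i : ℝ)) := hcon i hie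
        have hrpow : (2:ℝ) ^ (-(j i : ℝ)) = ((2:ℝ) ^ (j i : ℕ))⁻¹ := by
          rw [Real.rpow_neg (by norm_num), Real.rpow_natCast]
        rw [hrpow] at hcon'
        have hIF : I i = ∫ t in Set.Icc (0:ℝ) 1, |diff1 3 (h i) kinkFn t| := by
          rw [hI]; dsimp only; rw [hF]; dsimp only; rw [if_pos hie]
        rcases eq_or_lt_of_le (Nat.one_le_iff_ne_zero.mpr (Nat.pos_iff_ne_zero.mp hjpos)) with h1 | h2
        · -- j i = 1
          have hle16 : I i ≤ 16 := by rw [hIF]; exact integral_abs_diff1_le_crude _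
          have hj1 : j i = 1 := h1.symm
          rw [hj1]
          norm_num
          nlinarith [hInonneg i]
        · -- j i ≥ 2
          have hj2 : 2 ≤ j i := h2
          have hpow4 : (4:ℝ) ≤ (2:ℝ) ^ (j i : ℕ) := by
            calc (4:ℝ) = 2^2 := by norm_num
            _ ≤ (2:ℝ) ^ (j i : ℕ) := pow_le_pow_right₀ (by norm_num) hj2
          have hppos : (0:ℝ) < (2:ℝ) ^ (j i : ℕ) := by positivity
          have hh4 : |h i| ≤ 1/4 := by
            have h44 : ((2:ℝ) ^ (j i : ℕ))⁻¹ ≤ 4⁻¹ := by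
              apply inv_anti₀ (by norm_num) hpow4
            have := hcon'.le
            rw [show (4:ℝ)⁻¹ = 1/4 by norm_num] at h44
            linarith
          have hfine : I i ≤ 2160 * (h i)^2 := by
            rw [hIF]; exact integral_abs_diff1_le_fine hh4
          have hlt1 : (2:ℝ) ^ (j i : ℕ) * |h i| < 1 := by
            have := mul_lt_mul_of_pos_left hcon' hppos
            rwa [mul_inv_cancel₀ (ne_of_gt hppos)] at this
          have hp2 : (2:ℝ) ^ (2 * j i) = ((2:ℝ) ^ (j i : ℕ))^2 := by
            rw [two_mul, pow_add, sq]
          calc (2:ℝ) ^ (2 * j i) * I i = ((2:ℝ)^(j i:ℕ))^2 * I i := by rw [hp2]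
            _ ≤ ((2:ℝ)^(j i:ℕ))^2 * (2160 * (h i)^2) :=
                mul_le_mul_of_nonneg_left hfine (by positivity)
            _ = 2160 * ((2:ℝ)^(j i:ℕ) * |h i|)^2 := by rw [← sq_abs (h i)]; ring
            _ ≤ 2160 * 1 := by
                nlinarith [mul_nonneg hppos.le (abs_nonneg (h i))]
            _ = 2160 := mul_one _
    calc ∏ i, (2:ℝ) ^ (2 * j i) * I i ≤ ∏ _i : Fin d, (2160:ℝ) := by
          apply Finset.prod_le_prod
          · intro i _
            have := hInonneg i
            positivity
          · exact fun i _ => hfac i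
      _ = 2160 ^ d := by rw [Finset.prod_const, Finset.card_univ, Fintype.card_fin]
  unfold besovNorm lqNorm
  rw [if_pos rfl]
  exact lt_of_le_of_lt (iSup_le key) ENNReal.ofReal_lt_top

end KinkAux

/-- The tensor kink function has integral 1 and belongs to `S²_{1,∞}B(𝕋^d)`:
its difference Besov norm `‖g_d‖^{(3)}_{S²_{1,∞}B}` is finite. -/
theorem kink_function_integral_and_besov_regularity (d : ℕ) (hd : 1 ≤ d) :
    (∫ x in unitCube d, kinkFnTensor d x) = 1 ∧
      besovNorm d 3 2 1 ∞ (kinkFnTensor d) < ⊤ :=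
  ⟨KinkAux.kink_part1 d, KinkAux.kink_part2 d⟩
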